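/- Let Λ = ℤ^n (n ≥ 1) and let 𝓛 be a Lie algebra in the class 𝒢'(Λ). Then the subgroup of Λ generated by Π is all of Λ, and the set Σ is nonempty. -/

import Mathlib

namespace LieOnLattice

variable {n : ℕ} {L : Type*} [LieRing L] [LieAlgebra ℂ L]

/-- A `ℤ^n`-graded Lie algebra structure on `L`. -/
structure GradedLie (n : ℕ) (L : Type*) [LieRing L] [LieAlgebra ℂ L] where
  G : (Fin n → ℤ) → Submodule ℂ L
  internal : DirectSum.IsInternal G
  bracket_mem : ∀ (lam mu : Fin n → ℤ) (x y : L),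
    x ∈ G lam → y ∈ G mu → ⁅x, y⁆ ∈ G (lam + mu)

def GradedLie.IsGradedIdeal (D : GradedLie n L) (I : LieIdeal ℂ L) : Prop :=
  (I : Submodule ℂ L) = ⨆ lam, (I : Submodule ℂ L) ⊓ D.G lam

def GradedLie.SimpleGraded (D : GradedLie n L) : Prop :=
  (∃ x y : L, ⁅x, y⁆ ≠ 0) ∧ ∀ I : LieIdeal ℂ L, D.IsGradedIdeal I → I = ⊥ ∨ I = ⊤

/-- The support of the gradation. -/
def GradedLie.Supp (D : GradedLie n L) : Set (Fin n → ℤ) := {lam | D.G lam ≠ ⊥}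

/-- The class 𝒢': simple graded, homogeneous components of dimension at most one,
`dim 𝓛₀ = 1`, and the support generates the lattice. -/
def GradedLie.InClassG' (D : GradedLie n L) : Prop :=
  D.SimpleGraded ∧ (∀ lam, Module.rank ℂ (D.G lam) ≤ 1) ∧
    Module.finrank ℂ (D.G 0) = 1 ∧ AddSubgroup.closure D.Supp = ⊤

/-- The set Π of `α` with `±α` in the support and `⁅𝓛_α, 𝓛_{-α}⁆ ≠ 0`. -/
def GradedLie.PiSet (D : GradedLie n L) : Set (Fin n → ℤ) :=
  {α | α ∈ D.Supp ∧ -α ∈ D.Supp ∧ ∃ x ∈ D.G α, ∃ y ∈ D.G (-α), ⁅x, y⁆ ≠ 0}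

/-- The set Σ = {α ∈ Π : l(α) ≠ 0}. -/
def GradedLie.SigmaSet (D : GradedLie n L) (l : (Fin n → ℤ) → ℂ) : Set (Fin n → ℤ) :=
  {α | α ∈ D.PiSet ∧ l α ≠ 0}

/-- Master lemma: any "additive-along-nonzero-brackets" function vanishing on Π
vanishes on the whole support. -/
theorem GradedLie.master {M : Type*} [AddCommGroup M]
    (D : GradedLie n L) (hD : D.InClassG')
    (L0 : L) (hL0 : L0 ∈ D.G 0) (hL0ne : L0 ≠ 0)
    (c : (Fin n → ℤ) → M) (hc0 : c 0 = 0)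
    (hadd : ∀ (lam mu : Fin n → ℤ) (x y : L), x ∈ D.G lam → y ∈ D.G mu →
      ⁅x, y⁆ ≠ 0 → c (lam + mu) = c lam + c mu)
    (hPi : ∀ α ∈ D.PiSet, c α = 0) :
    ∀ lam ∈ D.Supp, c lam = 0 := by
  classical
  set S : Set L := {z | (∃ lam, c lam ≠ 0 ∧ z ∈ D.G lam) ∨
    (∃ lam mu : Fin n → ℤ, ∃ x y : L, x ∈ D.G lam ∧ y ∈ D.G mu ∧ c lam ≠ 0 ∧
      c lam + c mu = 0 ∧ z = ⁅x, y⁆)} with hSdef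
  set I : Submodule ℂ L := Submodule.span ℂ S with hIdef
  have h1 : ∀ (w : L) (lam : Fin n → ℤ), w ∈ D.G lam → c lam ≠ 0 → w ∈ I := by
    intro w lam hw hc
    exact Submodule.subset_span (Or.inl ⟨lam, hc, hw⟩)
  have h2 : ∀ (lam mu : Fin n → ℤ) (x y : L), x ∈ D.G lam → y ∈ D.G mu →
      c lam ≠ 0 → c lam + c mu = 0 → ⁅x, y⁆ ∈ I := by
    intro lam mu x y hx hy hc hsum
    exact Submodule.subset_span (Or.inr ⟨lam, mu, x, y, hx, hy, hc, hsum, rfl⟩)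
  -- homogeneous elements bracket S into I
  have hkey : ∀ (nu : Fin n → ℤ) (a : L), a ∈ D.G nu → ∀ z ∈ S, ⁅a, z⁆ ∈ I := by
    intro nu a ha z hz
    rcases hz with ⟨lam, hc, hzlam⟩ | ⟨lam, mu, x, y, hx, hy, hc, hsum, rfl⟩
    · -- z homogeneous with c lam ≠ 0
      by_cases hw : ⁅a, z⁆ = 0
      · rw [hw]; exact I.zero_mem
      · have hmem : ⁅a, z⁆ ∈ D.G (nu + lam) := D.bracket_mem _ _ _ _ ha hzlam
        by_cases hcz : c (nu + lam) = 0
        · have e := hadd nu lam a z ha hzlam hw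
          have hsum' : c lam + c nu = 0 := by rw [add_comm, ← e]; exact hcz
          have : ⁅z, a⁆ ∈ I := h2 lam nu z a hzlam ha hc hsum'
          have hneg : ⁅a, z⁆ = -⁅z, a⁆ := (lie_skew a z).symm
          rw [hneg]; exact I.neg_mem this
        · exact h1 _ _ hmem hcz
    · -- z = ⁅x, y⁆ with c lam ≠ 0, c lam + c mu = 0
      have hax : ⁅a, x⁆ ∈ D.G (nu + lam) := D.bracket_mem _ _ _ _ ha hx
      have hay : ⁅a, y⁆ ∈ D.G (nu + mu) := D.bracket_mem _ _ _ _ ha hy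
      have hm1 : ⁅⁅a, x⁆, y⁆ ∈ I := by
        by_cases ht : ⁅⁅a, x⁆, y⁆ = 0
        · rw [ht]; exact I.zero_mem
        · have haxne : ⁅a, x⁆ ≠ 0 := fun h => ht (by rw [h, zero_lie])
          have e1 := hadd nu lam a x ha hx haxne
          have e2 := hadd (nu + lam) mu ⁅a, x⁆ y hax hy ht
          by_cases hnu : c nu = 0
          · refine h2 (nu + lam) mu ⁅a, x⁆ y hax hy ?_ ?_
            · rw [e1, hnu, zero_add]; exact hc
            · rw [e1, hnu, zero_add]; exact hsum
          · refine h1 _ (nu + lam + mu) (D.bracket_mem _ _ _ _ hax hy) ?_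
            rw [e2, e1, add_assoc, hsum, add_zero]; exact hnu
      have hm2 : ⁅x, ⁅a, y⁆⁆ ∈ I := by
        by_cases ht : ⁅x, ⁅a, y⁆⁆ = 0
        · rw [ht]; exact I.zero_mem
        · have hayne : ⁅a, y⁆ ≠ 0 := fun h => ht (by rw [h, lie_zero])
          have e1 := hadd nu mu a y ha hy hayne
          have e2 := hadd lam (nu + mu) x ⁅a, y⁆ hx hay ht
          by_cases hnu : c nu = 0
          · refine h2 lam (nu + mu) x ⁅a, y⁆ hx hay hc ?_
            rw [e1, hnu, zero_add]; exact hsum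
          · refine h1 _ (lam + (nu + mu)) (D.bracket_mem _ _ _ _ hx hay) ?_
            rw [e2, e1]
            have : c lam + (c nu + c mu) = c nu + (c lam + c mu) := by abel
            rw [this, hsum, add_zero]; exact hnu
      rw [leibniz_lie]
      exact I.add_mem hm1 hm2
  have htop : (⨆ lam, D.G lam) = ⊤ := D.internal.submodule_iSup_eq_top
  -- I is a Lie ideal
  have hlie : ∀ (a z : L), z ∈ I → ⁅a, z⁆ ∈ I := by
    intro a z hz
    induction hz using Submodule.span_induction with
    | mem w hw =>
        have ha : a ∈ (⊤ : Submodule ℂ L) := Submodule.mem_top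
        rw [← htop] at ha
        exact Submodule.iSup_induction (motive := fun a => ⁅a, w⁆ ∈ I) D.G ha
          (fun nu b hb => hkey nu b hb w hw)
          (by show ⁅(0 : L), w⁆ ∈ I; rw [zero_lie]; exact I.zero_mem)
          (fun b b' hb hb' => by
            show ⁅b + b', w⁆ ∈ I
            rw [add_lie]
            exact I.add_mem hb hb')
    | zero => rw [lie_zero]; exact I.zero_mem
    | add u v _ _ hu hv => rw [lie_add]; exact I.add_mem hu hv
    | smul t u _ hu => rw [lie_smul]; exact I.smul_mem t hu
  set Ilie : LieIdeal ℂ L := { I with lie_mem := fun {x m} hm => hlie x m hm } with hIlie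
  have hIcoe : (Ilie : Submodule ℂ L) = I := rfl
  have hgraded : D.IsGradedIdeal Ilie := by
    rw [GradedLie.IsGradedIdeal, hIcoe]
    apply le_antisymm
    · rw [hIdef]
      apply Submodule.span_le.2
      intro z hz
      rcases hz with ⟨lam, hc, hzlam⟩ | ⟨lam, mu, x, y, hx, hy, hc, hsum, rfl⟩
      · exact Submodule.mem_iSup_of_mem lam ⟨h1 _ _ hzlam hc, hzlam⟩
      · exact Submodule.mem_iSup_of_mem (lam + mu)
          ⟨h2 lam mu x y hx hy hc hsum, D.bracket_mem _ _ _ _ hx hy⟩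
    · exact iSup_le fun lam => inf_le_left
  -- L0 ∉ I
  have hL0I : L0 ∉ I := by
    have hsub : I ≤ ⨆ lam, ⨆ _ : lam ≠ 0, D.G lam := by
      rw [hIdef]
      apply Submodule.span_le.2
      intro z hz
      rcases hz with ⟨lam, hc, hzlam⟩ | ⟨lam, mu, x, y, hx, hy, hc, hsum, rfl⟩
      · have hlam : lam ≠ 0 := fun h => hc (h ▸ hc0)
        exact Submodule.mem_iSup_of_mem lam (Submodule.mem_iSup_of_mem hlam hzlam)
      · by_cases h0 : lam + mu = 0
        · have hz0 : ⁅x, y⁆ = 0 := by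
            by_contra hzne
            have hxne : x ≠ 0 := fun h => hzne (by rw [h, zero_lie])
            have hyne : y ≠ 0 := fun h => hzne (by rw [h, lie_zero])
            have hmu : mu = -lam := (neg_eq_of_add_eq_zero_right h0).symm
            have hlamSupp : lam ∈ D.Supp := by
              intro hbot
              rw [hbot, Submodule.mem_bot] at hx
              exact hxne hx
            have hy' : y ∈ D.G (-lam) := hmu ▸ hy
            have hnlamSupp : -lam ∈ D.Supp := by
              intro hbot
              rw [hbot, Submodule.mem_bot] at hy'
              exact hyne hy'
            have : lam ∈ D.PiSet :=
              ⟨hlamSupp, hnlamSupp, x, hx, y, hy', hzne⟩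
            exact hc (hPi lam this)
          rw [hz0]
          exact Submodule.zero_mem _
        · exact Submodule.mem_iSup_of_mem (lam + mu)
            (Submodule.mem_iSup_of_mem h0 (D.bracket_mem _ _ _ _ hx hy))
    intro hmem
    have hdisj := D.internal.submodule_iSupIndep 0
    have : L0 ∈ D.G 0 ⊓ ⨆ lam, ⨆ _ : lam ≠ 0, D.G lam :=
      Submodule.mem_inf.2 ⟨hL0, hsub hmem⟩
    have := hdisj.le_bot this
    rw [Submodule.mem_bot] at this
    exact hL0ne this
  -- simplicity
  rcases hD.1.2 Ilie hgraded with hbot | htop'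
  · intro lam hlam
    by_contra hc
    have hGle : D.G lam ≤ I := fun w hw => h1 w lam hw hc
    have : (Ilie : Submodule ℂ L) = ⊥ := by rw [hbot]; rfl
    rw [hIcoe] at this
    rw [this, le_bot_iff] at hGle
    exact hlam hGle
  · exfalso
    apply hL0I
    have : (Ilie : Submodule ℂ L) = ⊤ := by rw [htop']; rfl
    rw [hIcoe] at this
    rw [this]
    exact Submodule.mem_top

/-- Lemma 12: Π generates Λ and Σ is nonempty. -/
theorem piSet_generates_and_sigmaSet_nonempty
    (hn : 1 ≤ n)
    (D : GradedLie n L) (hD : D.InClassG')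
    (L0 : L) (hL0 : L0 ∈ D.G 0) (hL0ne : L0 ≠ 0)
    (l : (Fin n → ℤ) → ℂ)
    (hl : ∀ (lam : Fin n → ℤ) (x : L), x ∈ D.G lam → ⁅L0, x⁆ = l lam • x) :
    AddSubgroup.closure D.PiSet = ⊤ ∧ (D.SigmaSet l).Nonempty := by
  classical
  constructor
  · -- Π generates Λ
    by_contra hne
    set H := AddSubgroup.closure D.PiSet with hH
    obtain ⟨x0, hx0⟩ : ∃ x0, x0 ∉ H := by
      by_contra h
      push_neg at h
      exact hne (AddSubgroup.eq_top_iff' H |>.mpr h)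
    have hm0 : (QuotientAddGroup.mk' H) x0 ≠ 0 := by
      rw [QuotientAddGroup.mk'_apply]
      intro h
      exact hx0 ((QuotientAddGroup.eq_zero_iff x0).mp h)
    obtain ⟨ch, hcne⟩ := CharacterModule.exists_character_apply_ne_zero_of_ne_zero hm0
    set phi : (Fin n → ℤ) →+ AddCircle (1 : ℚ) := ch.comp (QuotientAddGroup.mk' H) with hphi
    have hc0 : phi 0 = 0 := map_zero phi
    have haddc : ∀ (lam mu : Fin n → ℤ) (x y : L), x ∈ D.G lam → y ∈ D.G mu →
        ⁅x, y⁆ ≠ 0 → phi (lam + mu) = phi lam + phi mu := fun lam mu _ _ _ _ _ => map_add phi lam mu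
    have hPic : ∀ α ∈ D.PiSet, phi α = 0 := by
      intro α hα
      have h1 : (QuotientAddGroup.mk' H) α = 0 :=
        (QuotientAddGroup.eq_zero_iff α).mpr (AddSubgroup.subset_closure hα)
      show ch ((QuotientAddGroup.mk' H) α) = 0
      rw [h1, map_zero]
    have hsupp := D.master hD L0 hL0 hL0ne phi hc0 haddc hPic
    have hle : AddSubgroup.closure D.Supp ≤ phi.ker := by
      apply (AddSubgroup.closure_le _).mpr
      intro lam hlam
      exact AddMonoidHom.mem_ker.mpr (hsupp lam hlam)
    rw [hD.2.2.2] at hle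
    have : phi x0 = 0 := AddMonoidHom.mem_ker.mp (hle trivial)
    exact hcne this
  · -- Σ is nonempty
    by_contra hne
    have hPi0 : ∀ α ∈ D.PiSet, l α = 0 := by
      intro α hα
      by_contra h
      exact hne ⟨α, hα, h⟩
    have hl0 : l 0 = 0 := by
      have h := hl 0 L0 hL0
      rw [lie_self] at h
      rcases smul_eq_zero.mp h.symm with h' | h'
      · exact h'
      · exact absurd h' hL0ne
    have haddl : ∀ (lam mu : Fin n → ℤ) (x y : L), x ∈ D.G lam → y ∈ D.G mu →
        ⁅x, y⁆ ≠ 0 → l (lam + mu) = l lam + l mu := by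
      intro lam mu x y hx hy hzne
      have hz : ⁅x, y⁆ ∈ D.G (lam + mu) := D.bracket_mem _ _ _ _ hx hy
      have e1 := hl (lam + mu) _ hz
      have e2 : ⁅L0, ⁅x, y⁆⁆ = (l lam + l mu) • ⁅x, y⁆ := by
        rw [leibniz_lie, hl lam x hx, hl mu y hy, smul_lie, lie_smul, ← add_smul]
      have e3 : l (lam + mu) • ⁅x, y⁆ = (l lam + l mu) • ⁅x, y⁆ := by rw [← e1, e2]
      have e4 : (l (lam + mu) - (l lam + l mu)) • ⁅x, y⁆ = 0 := by
        rw [sub_smul, e3, sub_self]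
      rcases smul_eq_zero.mp e4 with h' | h'
      · exact sub_eq_zero.mp h'
      · exact absurd h' hzne
    have hsupp := D.master hD L0 hL0 hL0ne l hl0 haddl hPi0
    -- L0 is central
    have hcentral : ∀ a : L, ⁅L0, a⁆ = 0 := by
      intro a
      have ha : a ∈ (⊤ : Submodule ℂ L) := Submodule.mem_top
      rw [← D.internal.submodule_iSup_eq_top] at ha
      exact Submodule.iSup_induction (motive := fun a => ⁅L0, a⁆ = 0) D.G ha
        (fun lam x hx => by
          show ⁅L0, x⁆ = 0
          by_cases hSu : lam ∈ D.Supp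
          · rw [hl lam x hx, hsupp lam hSu, zero_smul]
          · have hbot : D.G lam = ⊥ := not_not.mp hSu
            rw [hbot, Submodule.mem_bot] at hx
            rw [hx, lie_zero])
        (by show ⁅L0, (0 : L)⁆ = 0; rw [lie_zero])
        (fun x y hx hy => by
          show ⁅L0, x + y⁆ = 0
          rw [lie_add, hx, hy, add_zero])
    set Z : Submodule ℂ L := Submodule.span ℂ {L0} with hZ
    have hZlie : ∀ (x m : L), m ∈ Z → ⁅x, m⁆ ∈ Z := by
      intro x m hm
      rcases Submodule.mem_span_singleton.mp hm with ⟨t, rfl⟩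
      have : ⁅x, t • L0⁆ = t • ⁅x, L0⁆ := lie_smul t x L0
      rw [this, ← lie_skew x L0, hcentral x, neg_zero, smul_zero]
      exact Z.zero_mem
    set Zlie : LieIdeal ℂ L := { Z with lie_mem := fun {x m} hm => hZlie x m hm } with hZlieDef
    have hZcoe : (Zlie : Submodule ℂ L) = Z := rfl
    have hgr : D.IsGradedIdeal Zlie := by
      rw [GradedLie.IsGradedIdeal, hZcoe]
      apply le_antisymm
      · have h1 : Z ≤ Z ⊓ D.G 0 :=
          le_inf le_rfl (Submodule.span_le.mpr (Set.singleton_subset_iff.mpr hL0))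
        exact h1.trans (le_iSup (fun lam => Z ⊓ D.G lam) 0)
      · exact iSup_le fun lam => inf_le_left
    have hL0Z : L0 ∈ Z := Submodule.subset_span rfl
    rcases hD.1.2 Zlie hgr with h | h
    · have hZbot : Z = ⊥ := by rw [← hZcoe, h]; rfl
      rw [hZbot, Submodule.mem_bot] at hL0Z
      exact hL0ne hL0Z
    · have hZtop : Z = ⊤ := by rw [← hZcoe, h]; rfl
      obtain ⟨x, y, hxy⟩ := hD.1.1
      have hx : x ∈ Z := hZtop ▸ Submodule.mem_top
      have hy : y ∈ Z := hZtop ▸ Submodule.mem_top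
      rcases Submodule.mem_span_singleton.mp hx with ⟨s, rfl⟩
      rcases Submodule.mem_span_singleton.mp hy with ⟨t, rfl⟩
      apply hxy
      rw [lie_smul, smul_lie, lie_self, smul_zero, smul_zero]


end LieOnLattice
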